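/- For all positive integers n and m and every tree T on n vertices, r(T, K_m) = (n − 1)(m − 1) + 1. -/
import Mathlib


/-- `ContainsCopy G H`: the graph `G` contains a copy of the graph `H` (as a subgraph),
i.e. there is an injective map of the vertices of `H` into `G` carrying edges to edges. -/
def ContainsCopy {α β : Type*} (G : SimpleGraph α) (H : SimpleGraph β) : Prop :=
  ∃ f : β ↪ α, ∀ ⦃u v : β⦄, H.Adj u v → G.Adj (f u) (f v)

/-- `Arrows N H₁ H₂` : `K_N → (H₁, H₂)`, i.e. every red-blue coloring of the edges of the
complete graph on `N` vertices (described by its graph `R` of red edges; the blue edges are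
those of `Rᶜ`) contains a red copy of `H₁` or a blue copy of `H₂`. -/
def Arrows (N : ℕ) {α β : Type*} (H₁ : SimpleGraph α) (H₂ : SimpleGraph β) : Prop :=
  ∀ R : SimpleGraph (Fin N), ContainsCopy R H₁ ∨ ContainsCopy Rᶜ H₂

/-- The Ramsey number `r(H₁, H₂)`: the least `N` with `K_N → (H₁, H₂)`. -/
noncomputable def ramseyNumber {α β : Type*} (H₁ : SimpleGraph α) (H₂ : SimpleGraph β) : ℕ :=
  sInf {N | Arrows N H₁ H₂}

/-- `tK t m` : the disjoint union of `t` copies of the complete graph `K_m`. -/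
def tK (t m : ℕ) : SimpleGraph (Fin t × Fin m) :=
  SimpleGraph.fromRel (fun a b => a.1 = b.1)

/-- `starG k` : the star `K_{1,k}`, with center `none` and `k` leaves. -/
def starG (k : ℕ) : SimpleGraph (Option (Fin k)) :=
  SimpleGraph.fromRel (fun a _ => a = none)

/-- A red-blue coloring of a complete graph (described by its graph `R` of red edges; the blue
edges are those of `Rᶜ`) belongs to the family `𝒢_{n,m,t}` if the vertex set can be partitioned
into classes `A₁, …, A_{m-1}` of size `n-1` (labelled `some i`) and a class `B` of size `t-1`
(labelled `none`) such that every edge inside some `Aᵢ` is red and every edge joining two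
different classes is blue (edges inside `B` are arbitrary). -/
def GFamily (n m t : ℕ) {V : Type*} [Fintype V] (R : SimpleGraph V) : Prop :=
  ∃ f : V → Option (Fin (m - 1)),
    (∀ i : Fin (m - 1), (Finset.univ.filter fun v => f v = some i).card = n - 1) ∧
    ((Finset.univ.filter fun v => f v = none).card = t - 1) ∧
    (∀ u v : V, u ≠ v → ∀ i : Fin (m - 1), f u = some i → f v = some i → R.Adj u v) ∧
    (∀ u v : V, f u ≠ f v → ¬ R.Adj u v)

/-- `RedMatchingBetween R X Y k` : there are `k` pairwise vertex-disjoint red edges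
(edges of `R`) joining `X` to `Y`. -/
def RedMatchingBetween {V : Type*} (R : SimpleGraph V) (X Y : Finset V) (k : ℕ) : Prop :=
  ∃ e : Fin k → V × V,
    (∀ p, (e p).1 ∈ X ∧ (e p).2 ∈ Y ∧ R.Adj (e p).1 (e p).2) ∧
    (∀ p q, p ≠ q → (e p).1 ≠ (e q).1 ∧ (e p).1 ≠ (e q).2 ∧
      (e p).2 ≠ (e q).1 ∧ (e p).2 ≠ (e q).2)

/-- `IsBlueMatching R k e` : in the red-blue colored complete graph with red graph `R`,
the `k` pairs given by `e` form a blue matching (pairwise vertex-disjoint blue edges). -/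
def IsBlueMatching {V : Type*} (R : SimpleGraph V) (k : ℕ) (e : Fin k → V × V) : Prop :=
  (∀ p, (e p).1 ≠ (e p).2 ∧ ¬ R.Adj (e p).1 (e p).2) ∧
  (∀ p q, p ≠ q → (e p).1 ≠ (e q).1 ∧ (e p).1 ≠ (e q).2 ∧
    (e p).2 ≠ (e q).1 ∧ (e p).2 ≠ (e q).2)

/-- `KplusStar M k` : the complete graph on the `M` vertices `some j`, together with one
extra vertex `none` joined to exactly `k` of them (namely `some j` for `j < k`). -/
def KplusStar (M k : ℕ) : SimpleGraph (Option (Fin M)) :=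
  SimpleGraph.fromRel (fun a b =>
    (a ≠ none ∧ b ≠ none) ∨ (a = none ∧ ∃ j : Fin M, b = some j ∧ (j : ℕ) < k))

/-- `ArrowsOn H H₁ H₂` : `H → (H₁, H₂)`, i.e. every red-blue coloring of the edges of the
host graph `H` (red graph `R ≤ H`, blue graph `H \ R`) contains a red copy of `H₁` or a
blue copy of `H₂`. -/
def ArrowsOn {V α β : Type*} (H : SimpleGraph V) (H₁ : SimpleGraph α) (H₂ : SimpleGraph β) :
    Prop :=
  ∀ R : SimpleGraph V, R ≤ H → ContainsCopy R H₁ ∨ ContainsCopy (H \ R) H₂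

/-- The star-critical Ramsey number `r₊(H₁, H₂)`: the least `k` such that the graph obtained
from `K_{N-1}` by adding one new vertex joined to exactly `k` of its vertices arrows
`(H₁, H₂)`, where `N = r(H₁, H₂)`. -/
noncomputable def starCritRamsey {α β : Type*} (H₁ : SimpleGraph α) (H₂ : SimpleGraph β) : ℕ :=
  sInf {k | ArrowsOn (KplusStar (ramseyNumber H₁ H₂ - 1) k) H₁ H₂}

/-- The chromatic number of `H`, as a natural number. -/
noncomputable def chromNum {β : Type*} (H : SimpleGraph β) : ℕ :=
  H.chromaticNumber.toNat

/-- The chromatic surplus `s(H)`: the minimum cardinality of a color class over all proper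
colorings of `H` with `χ(H)` colors. -/
noncomputable def chromSurplus {β : Type*} [Fintype β] (H : SimpleGraph β) : ℕ :=
  sInf {s | ∃ C : H.Coloring (Fin (chromNum H)),
    s = sInf {k | ∃ i : Fin (chromNum H),
      k = (Finset.univ.filter fun v => C v = i).card}}

section ChvatalAux
open SimpleGraph Finset
attribute [local instance] Classical.propDecidable


lemma exists_leaf {n : ℕ} (hn : 2 ≤ n) (T : SimpleGraph (Fin n)) (hc : T.Connected)
    (hE : T.edgeFinset.card ≤ n - 1) :
    ∃ ℓ p : Fin n, T.Adj ℓ p ∧ ∀ x, T.Adj ℓ x → x = p := by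
  -- every vertex has positive degree
  have hdeg : ∀ v : Fin n, 0 < T.degree v := by
    intro v
    rw [T.degree_pos_iff_exists_adj]
    obtain ⟨w, hw⟩ : ∃ w : Fin n, w ≠ v := by
      have h1 : 1 < n := hn
      refine ⟨if v = ⟨0, by omega⟩ then ⟨1, h1⟩ else ⟨0, by omega⟩, ?_⟩
      split <;> simp_all [Fin.ext_iff] <;> omega
    obtain ⟨wlk⟩ := hc.preconnected v w
    cases wlk with
    | nil => exact absurd rfl hw.symm
    | cons h _ => exact ⟨_, h⟩
  -- some vertex has degree 1
  have hsum : ∑ v : Fin n, T.degree v = 2 * T.edgeFinset.card :=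
    T.sum_degrees_eq_twice_card_edges
  have : ∃ ℓ : Fin n, T.degree ℓ = 1 := by
    by_contra hno
    push_neg at hno
    have h2 : ∀ v : Fin n, 2 ≤ T.degree v := by
      intro v
      have := hdeg v
      have := hno v
      omega
    have : 2 * n ≤ ∑ v : Fin n, T.degree v := by
      calc 2 * n = ∑ _v : Fin n, 2 := by simp [mul_comm]
      _ ≤ _ := Finset.sum_le_sum fun v _ => h2 v
    omega
  obtain ⟨ℓ, hℓ⟩ := this
  have : (T.neighborFinset ℓ).card = 1 := hℓ
  rw [Finset.card_eq_one] at this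
  obtain ⟨p, hp⟩ := this
  have hmem : ∀ x, T.Adj ℓ x ↔ x ∈ T.neighborFinset ℓ := by
    intro x; rw [mem_neighborFinset]
  refine ⟨ℓ, p, ?_, ?_⟩
  · rw [hmem, hp]; exact Finset.mem_singleton_self p
  · intro x hx; rw [hmem, hp, Finset.mem_singleton] at hx; exact hx



lemma walk_avoid {V K : Type*} (G : SimpleGraph V) (ℓ p : V)
    (hp : ∀ x, G.Adj ℓ x → x = p) (φ : K → V) (hinj : Function.Injective φ)
    (hφ : ∀ x : V, x ≠ ℓ → ∃ a, φ a = x) (hℓ : ∀ a, φ a ≠ ℓ) :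
    ∀ (N : ℕ) (x y : V) (w : G.Walk x y), w.length ≤ N →
      ∀ a b : K, φ a = x → φ b = y → (G.comap φ).Reachable a b := by
  intro N
  induction N with
  | zero =>
    intro x y w hw a b hax hby
    cases w with
    | nil => exact (hinj (hax.trans hby.symm)) ▸ Reachable.refl a
    | cons h w' => simp at hw
  | succ N ih =>
    intro x y w hw a b hax hby
    cases w with
    | nil => exact (hinj (hax.trans hby.symm)) ▸ Reachable.refl a
    | cons h w' =>
      rename_i c
      by_cases hc : c = ℓ
      · subst hc
        have hap : φ a = p := hp _ (hax ▸ h.symm)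
        cases w' with
        | nil => exact absurd hby (hℓ b)
        | cons h2 w'' =>
          rename_i d
          have hd : d = p := hp _ h2
          exact ih _ _ w'' (by simp at hw; omega) a b (hap.trans hd.symm) hby
      · obtain ⟨a', ha'⟩ := hφ c hc
        have hadj : (G.comap φ).Adj a a' := by
          simp only [SimpleGraph.comap_adj, ha', hax]; exact h
        exact hadj.reachable.trans (ih _ _ w' (by simp at hw; omega) a' b ha' hby)

lemma embT : ∀ (n : ℕ) (T : SimpleGraph (Fin n)), T.Connected →
    T.edgeFinset.card ≤ n - 1 →
    ∀ {V : Type} (G : SimpleGraph V) (S : Finset V),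
      (∀ v ∈ S, n - 1 ≤ (S.filter (fun w => G.Adj v w)).card) → S.Nonempty →
      ∃ f : Fin n → V, Function.Injective f ∧ (∀ i, f i ∈ S) ∧
        ∀ u v : Fin n, T.Adj u v → G.Adj (f u) (f v) := by
  intro n
  induction n with
  | zero => intro T hc _; exact absurd hc.nonempty (by simp [← Fintype.card_pos_iff])
  | succ k ih =>
    intro T hc hE V G S hS hne
    rcases Nat.eq_zero_or_pos k with hk | hk
    · -- n = 1
      subst hk
      obtain ⟨x, hx⟩ := hne
      have hone : ∀ a b : Fin (0+1), a = b := fun a b => Fin.ext (by omega)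
      refine ⟨fun _ => x, fun a b _ => hone a b, fun _ => hx, ?_⟩
      intro u v huv
      exact absurd (hone u v) huv.ne
    · -- n = k+1 ≥ 2
      obtain ⟨ℓ, p, hlp, hup⟩ := exists_leaf (by omega) T hc hE
      have hpl : p ≠ ℓ := fun h => T.irrefl (h ▸ hlp)
      have hcard : Fintype.card {x : Fin (k+1) // x ≠ ℓ} = k := by
        simp [Fintype.card_subtype_compl]
      let e : {x : Fin (k+1) // x ≠ ℓ} ≃ Fin k := Fintype.equivFinOfCardEq hcard
      let φ : Fin k → Fin (k+1) := fun j => (e.symm j).val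
      have hφinj : Function.Injective φ := fun a b h =>
        e.symm.injective (Subtype.ext h)
      have hφsurj : ∀ x : Fin (k+1), x ≠ ℓ → ∃ a, φ a = x := fun x hx =>
        ⟨e ⟨x, hx⟩, by simp [φ]⟩
      have hφne : ∀ a, φ a ≠ ℓ := fun a => (e.symm a).2
      set T' : SimpleGraph (Fin k) := T.comap φ with hT'
      have hc' : T'.Connected := by
        rw [SimpleGraph.connected_iff]
        refine ⟨?_, ⟨⟨0, hk⟩⟩⟩
        · intro a b
          obtain ⟨w⟩ := hc.preconnected (φ a) (φ b)
          exact walk_avoid T ℓ p hup φ hφinj hφsurj hφne w.length _ _ w le_rfl a b rfl rfl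
      have hE' : T'.edgeFinset.card ≤ k - 1 := by
        have hsub : T'.edgeFinset.image (Sym2.map φ) ⊆ T.edgeFinset.erase s(ℓ, p) := by
          intro x hx
          obtain ⟨y, hy, rfl⟩ := Finset.mem_image.mp hx
          induction y with
          | _ a b =>
            rw [mem_edgeFinset, mem_edgeSet] at hy
            rw [Sym2.map_pair_eq, Finset.mem_erase, mem_edgeFinset, mem_edgeSet]
            refine ⟨?_, hy⟩
            intro hcontr
            rw [Sym2.eq_iff] at hcontr
            rcases hcontr with ⟨h1, _⟩ | ⟨_, h2⟩
            · exact hφne a h1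
            · exact hφne b h2
        have h1 : T'.edgeFinset.card = (T'.edgeFinset.image (Sym2.map φ)).card :=
          (Finset.card_image_of_injective _ (Sym2.map.injective hφinj)).symm
        have h2 : (T.edgeFinset.erase s(ℓ, p)).card = T.edgeFinset.card - 1 :=
          Finset.card_erase_of_mem (by rw [mem_edgeFinset, mem_edgeSet]; exact hlp)
        have := Finset.card_le_card hsub
        omega
      obtain ⟨f', hf'inj, hf'S, hf'adj⟩ := ih T' hc' hE' G S
        (fun v hv => le_trans (by omega) (hS v hv)) hne
      -- extend f' to ℓ
      set pk : Fin k := e ⟨p, hpl⟩ with hpk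
      have hφpk : φ pk = p := by simp [φ, pk]
      set x : V := f' pk with hx
      have hxS : x ∈ S := hf'S pk
      have hfree : ((S.filter (fun w => G.Adj x w)) \ (Finset.univ.image f')).Nonempty := by
        by_contra hno
        rw [Finset.not_nonempty_iff_eq_empty, Finset.sdiff_eq_empty_iff_subset] at hno
        have hxnot : x ∉ S.filter (fun w => G.Adj x w) := by
          simp [G.irrefl]
        have hsub2 : S.filter (fun w => G.Adj x w) ⊆ (Finset.univ.image f').erase x :=
          fun y hy => Finset.mem_erase.mpr ⟨fun h => hxnot (h ▸ hy), hno hy⟩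
        have hcard2 : ((Finset.univ.image f').erase x).card ≤ k - 1 := by
          have : (Finset.univ.image f').card = k := by
            rw [Finset.card_image_of_injective _ hf'inj, Finset.card_univ, Fintype.card_fin]
          have hxmem : x ∈ Finset.univ.image f' :=
            Finset.mem_image.mpr ⟨pk, Finset.mem_univ _, rfl⟩
          rw [Finset.card_erase_of_mem hxmem]; omega
        have := Finset.card_le_card hsub2
        have := hS x hxS
        simp only [Nat.add_sub_cancel] at this
        omega
      obtain ⟨y, hy⟩ := hfree
      rw [Finset.mem_sdiff, Finset.mem_filter] at hy
      obtain ⟨⟨hyS, hyadj⟩, hynot⟩ := hy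
      have hynotim : ∀ j, f' j ≠ y := by
        intro j h
        exact hynot (Finset.mem_image.mpr ⟨j, Finset.mem_univ _, h⟩)
      refine ⟨fun i => if h : i = ℓ then y else f' (e ⟨i, h⟩), ?_, ?_, ?_⟩
      · intro a b hab
        by_cases ha : a = ℓ <;> by_cases hb : b = ℓ
        · rw [ha, hb]
        · simp only [ha, hb, dif_pos, dif_neg] at hab
          exact absurd hab.symm (hynotim _)
        · simp only [ha, hb, dif_pos, dif_neg] at hab
          exact absurd hab (hynotim _)
        · simp only [dif_neg ha, dif_neg hb] at hab
          exact congrArg Subtype.val (e.injective (hf'inj hab))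
      · intro i
        by_cases h : i = ℓ <;> simp only [h, dif_pos, dif_neg]
        · exact hyS
        · exact hf'S _
      · intro u v huv
        by_cases hu : u = ℓ <;> by_cases hv : v = ℓ
        · exact absurd (hu.trans hv.symm) huv.ne
        · subst hu
          have hvp : v = p := hup v huv
          simp only [dif_pos, dif_neg hv]
          have : e ⟨v, hv⟩ = pk := by rw [hpk]; congr
          rw [this, ← hx]
          exact hyadj.symm
        · subst hv
          have hup2 : u = p := hup u huv.symm
          simp only [dif_pos, dif_neg hu]
          have : e ⟨u, hu⟩ = pk := by rw [hpk]; congr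
          rw [this, ← hx]
          exact hyadj
        · simp only [dif_neg hu, dif_neg hv]
          apply hf'adj
          show T.Adj (φ (e ⟨u, hu⟩)) (φ (e ⟨v, hv⟩))
          simp only [φ, Equiv.symm_apply_apply]
          exact huv



lemma indep_set {V : Type*} (d : ℕ) (G : SimpleGraph V)
    (h : ∀ S : Finset V, S.Nonempty → ∃ v ∈ S, (S.filter (fun w => G.Adj v w)).card + 1 ≤ d) :
    ∀ S : Finset V, ∃ I : Finset V, I ⊆ S ∧
      (∀ a ∈ I, ∀ b ∈ I, a ≠ b → ¬ G.Adj a b) ∧ S.card ≤ d * I.card := by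
  intro S
  induction S using Finset.strongInductionOn with
  | _ S ihS =>
    rcases Finset.eq_empty_or_nonempty S with rfl | hne
    · exact ⟨∅, Finset.Subset.refl _, by simp, by simp⟩
    · obtain ⟨v, hvS, hv⟩ := h S hne
      set D : Finset V := insert v (S.filter (fun w => G.Adj v w)) with hD
      set S' : Finset V := S \ D with hS'
      have hss : S' ⊂ S := by
        refine Finset.sdiff_ssubset ?_ ?_ <;>
          simp [hD, Finset.insert_subset_iff, hvS, Finset.filter_subset]
      obtain ⟨I', hI'sub, hI'ind, hI'card⟩ := ihS S' hss
      have hvD : v ∈ D := Finset.mem_insert_self _ _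
      have hvnot : v ∉ S' := by simp [hS', hvD]
      refine ⟨insert v I', ?_, ?_, ?_⟩
      · rw [Finset.insert_subset_iff]
        exact ⟨hvS, hI'sub.trans (Finset.sdiff_subset)⟩
      · intro a ha b hb hab
        rw [Finset.mem_insert] at ha hb
        have key : ∀ c ∈ I', ¬ G.Adj v c := by
          intro c hc hadj
          have hcS' := hI'sub hc
          rw [hS', Finset.mem_sdiff] at hcS'
          exact hcS'.2 (Finset.mem_insert_of_mem (Finset.mem_filter.mpr ⟨hcS'.1, hadj⟩))
        rcases ha with rfl | ha
        · rcases hb with rfl | hb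
          · exact absurd rfl hab
          · exact key b hb
        · rcases hb with rfl | hb
          · exact fun hadj => key a ha hadj.symm
          · exact hI'ind a ha b hb hab
      · have h1 : S.card ≤ S'.card + D.card := by
          have : S ⊆ S' ∪ D := by
            intro x hx
            rw [Finset.mem_union, hS', Finset.mem_sdiff]
            by_cases hxD : x ∈ D
            · exact Or.inr hxD
            · exact Or.inl ⟨hx, hxD⟩
          exact le_trans (Finset.card_le_card this) (Finset.card_union_le _ _)
        have h2 : D.card ≤ d := le_trans (Finset.card_insert_le _ _) hv
        have h3 : v ∉ I' := fun hvI => hvnot (hI'sub hvI)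
        rw [Finset.card_insert_of_notMem h3, Nat.mul_add, Nat.mul_one]
        omega

end ChvatalAux

section ChvatalAux
open SimpleGraph Finset
attribute [local instance] Classical.propDecidable

lemma arrows_mono {α β : Type*} (H₁ : SimpleGraph α) (H₂ : SimpleGraph β) {k N : ℕ}
    (h : k ≤ N) (hk : Arrows k H₁ H₂) : Arrows N H₁ H₂ := by
  intro R
  rcases hk (R.comap (Fin.castLE h)) with ⟨f, hf⟩ | ⟨f, hf⟩
  · exact Or.inl ⟨f.trans (Fin.castLEEmb h), fun u v huv => hf huv⟩
  · refine Or.inr ⟨f.trans (Fin.castLEEmb h), fun u v huv => ?_⟩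
    have := hf huv
    rw [SimpleGraph.compl_adj] at this ⊢
    exact ⟨fun hc => this.1 ((Fin.castLEEmb h).injective hc), this.2⟩

lemma chvatal_upper (n m : ℕ) (hn : 1 ≤ n) (hm : 1 ≤ m)
    (T : SimpleGraph (Fin n)) (hT : T.IsTree) :
    Arrows ((n - 1) * (m - 1) + 1) T (⊤ : SimpleGraph (Fin m)) := by
  set N := (n - 1) * (m - 1) + 1 with hN
  intro R
  rcases Nat.lt_or_ge n 2 with h1 | h2
  · -- n = 1 : T has no edges, any vertex works
    left
    have hn1 : n = 1 := by omega
    refine ⟨⟨fun _ => ⟨0, Nat.succ_pos _⟩, fun a b _ => ?_⟩, ?_⟩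
    · subst hn1; exact Fin.ext (by omega)
    · intro u v huv
      subst hn1
      exact absurd (Fin.ext (by omega) : u = v) huv.ne
  · by_cases hcase : ∃ S : Finset (Fin N), S.Nonempty ∧
        ∀ v ∈ S, n - 1 ≤ (S.filter (fun w => R.Adj v w)).card
    · left
      obtain ⟨S, hne, hS⟩ := hcase
      have hc : T.Connected := hT.isConnected
      have hE : T.edgeFinset.card ≤ n - 1 := by
        have := hT.card_edgeFinset
        rw [Fintype.card_fin] at this
        omega
      obtain ⟨f, hinj, _, hadj⟩ := embT n T hc hE R S (fun v hv => hS v hv) hne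
      exact ⟨⟨f, hinj⟩, fun u v h => by simpa using hadj u v h⟩
    · right
      push_neg at hcase
      have h' : ∀ S : Finset (Fin N), S.Nonempty →
          ∃ v ∈ S, (S.filter (fun w => R.Adj v w)).card + 1 ≤ n - 1 := by
        intro S hSne
        obtain ⟨v, hv, hlt⟩ := hcase S hSne
        exact ⟨v, hv, by omega⟩
      obtain ⟨I, _, hind, hcard⟩ := indep_set (n - 1) R h' Finset.univ
      have hmI : m ≤ I.card := by
        rw [Finset.card_univ, Fintype.card_fin] at hcard
        by_contra hlt
        push_neg at hlt
        have : (n - 1) * I.card ≤ (n - 1) * (m - 1) :=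
          Nat.mul_le_mul_left _ (by omega)
        omega
      obtain ⟨J, hJI, hJcard⟩ := Finset.exists_subset_card_eq hmI
      set g := J.orderEmbOfFin hJcard with hg
      refine ⟨⟨fun i => g i, g.injective⟩, ?_⟩
      intro u v huv
      have hne' : g u ≠ g v := fun h => huv.ne (g.injective h)
      show (Rᶜ).Adj (g u) (g v)
      rw [SimpleGraph.compl_adj]
      exact ⟨hne', hind _ (hJI (J.orderEmbOfFin_mem hJcard u))
        _ (hJI (J.orderEmbOfFin_mem hJcard v)) hne'⟩

lemma chvatal_lower (n m : ℕ) (hn : 2 ≤ n) (hm : 2 ≤ m)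
    (T : SimpleGraph (Fin n)) (hTc : T.Connected) :
    ¬ Arrows ((n - 1) * (m - 1)) T (⊤ : SimpleGraph (Fin m)) := by
  intro h
  set N0 := (n - 1) * (m - 1) with hN0
  set R : SimpleGraph (Fin N0) :=
    SimpleGraph.fromRel (fun a b => a.val / (n - 1) = b.val / (n - 1)) with hR
  have hcls : ∀ x y : Fin N0, R.Adj x y → x.val / (n - 1) = y.val / (n - 1) := by
    intro x y hxy
    rw [hR, SimpleGraph.fromRel_adj] at hxy
    rcases hxy.2 with h | h
    · exact h
    · exact h.symm
  rcases h R with ⟨f, hf⟩ | ⟨g, hg⟩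
  · -- red copy of T : impossible
    have hconst : ∀ x y : Fin n, T.Reachable x y →
        (f x).val / (n - 1) = (f y).val / (n - 1) := by
      intro x y hxy
      obtain ⟨w⟩ := hxy
      induction w with
      | nil => rfl
      | cons hadj _ ih => exact (hcls _ _ (hf hadj)).trans ih
    have hn1 : 0 < n - 1 := by omega
    set F : Fin n → Fin (n - 1) :=
      fun i => ⟨(f i).val % (n - 1), Nat.mod_lt _ hn1⟩ with hF
    have hFinj : Function.Injective F := by
      intro i j hij
      have h1 : (f i).val % (n - 1) = (f j).val % (n - 1) := by
        simpa [hF, Fin.ext_iff] using hij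
      have h2 : (f i).val / (n - 1) = (f j).val / (n - 1) :=
        hconst i j (hTc.preconnected i j)
      have h3 : (f i).val = (f j).val := by
        have e1 := Nat.div_add_mod (f i).val (n - 1)
        have e2 := Nat.div_add_mod (f j).val (n - 1)
        rw [← h2] at e2
        omega
      exact f.injective (Fin.ext h3)
    have := Fintype.card_le_of_injective F hFinj
    rw [Fintype.card_fin, Fintype.card_fin] at this
    omega
  · -- blue copy of K_m : impossible
    have hn1 : 0 < n - 1 := by omega
    have hlt : ∀ i : Fin m, (g i).val / (n - 1) < m - 1 := by
      intro i
      rw [Nat.div_lt_iff_lt_mul hn1]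
      calc ((g i) : ℕ) < N0 := (g i).isLt
        _ = (m - 1) * (n - 1) := by rw [hN0, Nat.mul_comm]
    set F : Fin m → Fin (m - 1) := fun i => ⟨(g i).val / (n - 1), hlt i⟩ with hF
    have hFinj : Function.Injective F := by
      intro i j hij
      by_contra hne
      have htop : (⊤ : SimpleGraph (Fin m)).Adj i j := hne
      have hblue := hg htop
      rw [SimpleGraph.compl_adj, hR, SimpleGraph.fromRel_adj] at hblue
      apply hblue.2
      refine ⟨hblue.1, Or.inl ?_⟩
      simpa [hF, Fin.ext_iff] using hij
    have := Fintype.card_le_of_injective F hFinj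
    rw [Fintype.card_fin, Fintype.card_fin] at this
    omega

end ChvatalAux

/-- **Chvátal's theorem.** For all positive integers `n` and `m` and every tree `T` on `n`
vertices, `r(T, K_m) = (n − 1)(m − 1) + 1`. -/

theorem tree_Km_ramsey (n m : ℕ) (hn : 1 ≤ n) (hm : 1 ≤ m)
    (T : SimpleGraph (Fin n)) (hT : T.IsTree) :
    ramseyNumber T (⊤ : SimpleGraph (Fin m)) = (n - 1) * (m - 1) + 1 := by
  classical
  apply le_antisymm
  · exact Nat.sInf_le (chvatal_upper n m hn hm T hT)
  · have hmem : Arrows ((n - 1) * (m - 1) + 1) T (⊤ : SimpleGraph (Fin m)) :=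
      chvatal_upper n m hn hm T hT
    refine le_csInf ⟨_, hmem⟩ ?_
    intro k hk
    by_contra hlt
    push_neg at hlt
    have hk' : Arrows ((n - 1) * (m - 1)) T (⊤ : SimpleGraph (Fin m)) :=
      arrows_mono T _ (by omega) hk
    rcases Nat.lt_or_ge n 2 with h1 | h2
    · -- n = 1 : (n-1)*(m-1) = 0, no vertices
      have hz : (n - 1) * (m - 1) = 0 := by
        have : n - 1 = 0 := by omega
        simp [this]
      rcases hk' ((by rw [hz] at hk' ⊢; exact ⊥) : SimpleGraph (Fin ((n-1)*(m-1)))) with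
        ⟨f, _⟩ | ⟨f, _⟩
      · exact absurd (f ⟨0, by omega⟩).isLt (by omega)
      · exact absurd (f ⟨0, by omega⟩).isLt (by omega)
    · rcases Nat.lt_or_ge m 2 with hm1 | hm2
      · have hz : (n - 1) * (m - 1) = 0 := by
          have : m - 1 = 0 := by omega
          simp [this]
        rcases hk' ⊥ with ⟨f, _⟩ | ⟨f, _⟩
        · exact absurd (f ⟨0, by omega⟩).isLt (by omega)
        · exact absurd (f ⟨0, by omega⟩).isLt (by omega)
      · exact chvatal_lower n m h2 hm2 T hT.isConnected hk'
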